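/- Let M+1 be odd, w ∈ ℝ^{M+1} have components w_j = j/M − 1/2, P = w wᵀ/‖w‖², and L the skew-symmetric matrix with −1 above and 1 below the diagonal. Then the vectors v_o (ones in odd positions, zeros elsewhere) and v_e (ones in even positions, zeros elsewhere) form a basis of the kernel of (I − P)L, which is 2-dimensional. -/

import Mathlib

/-- The skew-symmetric matrix with `−1` above and `1` below the diagonal. -/
def Lmat (M : ℕ) : Matrix (Fin (M+1)) (Fin (M+1)) ℝ :=
  Matrix.of fun i j => if i < j then -1 else if j < i then 1 else 0

/-- The constraint vector `w` with `w_j = j/M − 1/2`. -/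
noncomputable def wvec (M : ℕ) : Fin (M+1) → ℝ :=
  fun j => (j : ℕ) / (M : ℝ) - 1/2

/-- The projection matrix `P = w wᵀ / ‖w‖²`. -/
noncomputable def Pmat (M : ℕ) : Matrix (Fin (M+1)) (Fin (M+1)) ℝ :=
  Matrix.of fun i j => wvec M i * wvec M j / (∑ k, wvec M k * wvec M k)

open Finset

noncomputable def Esum (n : ℕ) : ℝ := ∑ k ∈ range n, (if Even k then (1:ℝ) else 0)

lemma two_Esum (n : ℕ) : 2 * Esum n = n + (if Even n then 0 else 1) := by
  induction n with
  | zero => simp [Esum]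
  | succ n ih =>
    have h : Esum (n+1) = Esum n + (if Even n then 1 else 0) := by
      simp only [Esum, Finset.sum_range_succ]
    rw [h]
    rcases Nat.even_or_odd n with he | ho
    · rw [if_pos he] at *
      rw [if_neg (by simp [Nat.even_add_one, he])]
      push_cast; linarith
    · have hne : ¬ Even n := Nat.not_even_iff_odd.mpr ho
      rw [if_neg hne] at *
      rw [if_pos (by simp [Nat.even_add_one, hne])]
      push_cast; linarith

lemma Osum_eq (n : ℕ) :
    ∑ k ∈ range n, (if Odd k then (1:ℝ) else 0) = n - Esum n := by
  induction n with
  | zero => simp [Esum]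
  | succ n ih =>
    have h : Esum (n+1) = Esum n + (if Even n then 1 else 0) := by
      simp only [Esum, Finset.sum_range_succ]
    rw [Finset.sum_range_succ, ih, h]
    rcases Nat.even_or_odd n with he | ho
    · rw [if_pos he, if_neg (Nat.not_odd_iff_even.mpr he)]
      push_cast; ring
    · rw [if_neg (Nat.not_even_iff_odd.mpr ho), if_pos ho]
      push_cast; ring

lemma sum_if_lt (g : ℕ → ℝ) (m N : ℕ) (h : m ≤ N) :
    ∑ k ∈ range N, (if k < m then g k else 0) = ∑ k ∈ range m, g k := by
  rw [← Finset.sum_filter]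
  congr 1
  ext k
  simp only [Finset.mem_filter, Finset.mem_range]
  omega

lemma mulVec_formula (M : ℕ) (g : ℕ → ℝ) (i : Fin (M+1)) :
    (Lmat M).mulVec (fun j => g j.val) i
      = (∑ k ∈ range i.val, g k) + (∑ k ∈ range (i.val+1), g k)
        - ∑ k ∈ range (M+1), g k := by
  have h1 : (Lmat M).mulVec (fun j => g j.val) i
      = ∑ k ∈ range (M+1),
          (if i.val < k then (-1:ℝ) else if k < i.val then 1 else 0) * g k := by
    rw [Matrix.mulVec, ← Fin.sum_univ_eq_sum_range
      (fun k => (if i.val < k then (-1:ℝ) else if k < i.val then 1 else 0) * g k)]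
    show dotProduct _ _ = _
    rw [dotProduct]
    refine Finset.sum_congr rfl fun j _ => ?_
    congr 1
  have h2 : ∀ k ∈ range (M+1),
      (if i.val < k then (-1:ℝ) else if k < i.val then 1 else 0) * g k
        = ((if k < i.val then g k else 0) + (if k < i.val + 1 then g k else 0) - g k) := by
    intro k _
    rcases lt_trichotomy k i.val with h | h | h
    · have ha : ¬ i.val < k := by omega
      have hb : k < i.val + 1 := by omega
      rw [if_neg ha, if_pos h, if_pos h, if_pos hb]; ring
    · subst h
      simp
    · have ha : ¬ k < i.val := by omega
      have hb : ¬ k < i.val + 1 := by omega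
      rw [if_pos h, if_neg ha, if_neg hb]; ring
  rw [h1, Finset.sum_congr rfl h2, Finset.sum_sub_distrib, Finset.sum_add_distrib,
    sum_if_lt g i.val (M+1) (by omega), sum_if_lt g (i.val+1) (M+1) (by omega)]

lemma indicator_sum (n : ℕ) :
    (if Even n then (0:ℝ) else 1) + (if Even (n+1) then 0 else 1) = 1 := by
  rcases Nat.even_or_odd n with he | ho
  · rw [if_pos he, if_neg (by simp [Nat.even_add_one, he])]; ring
  · have hne : ¬ Even n := Nat.not_even_iff_odd.mpr ho
    rw [if_neg hne, if_pos (by simp [Nat.even_add_one, hne])]; ring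

lemma wvec_val (M : ℕ) (i : Fin (M+1)) : wvec M i = (i.val : ℝ) / M - 1/2 := rfl

lemma L_ve (M : ℕ) (hM : 0 < M) (hMe : Even M) (i : Fin (M+1)) :
    (Lmat M).mulVec (fun j : Fin (M+1) => if Even (j : ℕ) then (1:ℝ) else 0) i
      = (M : ℝ) * wvec M i := by
  have hform := mulVec_formula M (fun k => if Even k then (1:ℝ) else 0) i
  have hMne : (M:ℝ) ≠ 0 := Nat.cast_ne_zero.mpr hM.ne'
  have e1 := two_Esum i.val
  have e2 := two_Esum (i.val+1)
  have e3 := two_Esum (M+1)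
  rw [if_neg (by simp [Nat.even_add_one, hMe])] at e3
  have hind := indicator_sum i.val
  have hw : (M:ℝ) * wvec M i = (i.val : ℝ) - (M:ℝ)/2 := by
    rw [wvec_val]; field_simp
  rw [show (fun j : Fin (M+1) => if Even (j : ℕ) then (1:ℝ) else 0)
      = (fun j : Fin (M+1) => (fun k => if Even k then (1:ℝ) else 0) j.val) from rfl,
    hform, hw]
  have key : Esum i.val + Esum (i.val+1) - Esum (M+1) = (i.val:ℝ) - (M:ℝ)/2 := by
    push_cast at *
    linarith
  exact key

lemma L_vo (M : ℕ) (hM : 0 < M) (hMe : Even M) (i : Fin (M+1)) :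
    (Lmat M).mulVec (fun j : Fin (M+1) => if Odd (j : ℕ) then (1:ℝ) else 0) i
      = (M : ℝ) * wvec M i := by
  have hform := mulVec_formula M (fun k => if Odd k then (1:ℝ) else 0) i
  have hMne : (M:ℝ) ≠ 0 := Nat.cast_ne_zero.mpr hM.ne'
  have e1 := two_Esum i.val
  have e2 := two_Esum (i.val+1)
  have e3 := two_Esum (M+1)
  rw [if_neg (by simp [Nat.even_add_one, hMe])] at e3
  have hind := indicator_sum i.val
  have o1 := Osum_eq i.val
  have o2 := Osum_eq (i.val+1)
  have o3 := Osum_eq (M+1)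
  have hw : (M:ℝ) * wvec M i = (i.val : ℝ) - (M:ℝ)/2 := by
    rw [wvec_val]; field_simp
  rw [show (fun j : Fin (M+1) => if Odd (j : ℕ) then (1:ℝ) else 0)
      = (fun j : Fin (M+1) => (fun k => if Odd k then (1:ℝ) else 0) j.val) from rfl,
    hform, hw, o1, o2, o3]
  push_cast at *
  linarith

lemma Qpos (M : ℕ) : 0 < ∑ k, wvec M k * wvec M k := by
  apply Finset.sum_pos' (fun k _ => mul_self_nonneg _)
  refine ⟨0, Finset.mem_univ _, ?_⟩
  have h0 : wvec M 0 = -(1/2) := by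
    rw [wvec_val]; norm_num
  rw [h0]; norm_num

lemma proj_kill (M : ℕ) (x : Fin (M+1) → ℝ) (c : ℝ) (hx : ∀ i, x i = c * wvec M i) :
    (1 - Pmat M).mulVec x = 0 := by
  have hQ : (∑ k, wvec M k * wvec M k) ≠ 0 := (Qpos M).ne'
  funext i
  rw [Matrix.sub_mulVec, Matrix.one_mulVec]
  have hP : (Pmat M).mulVec x i = c * wvec M i := by
    rw [Matrix.mulVec, dotProduct]
    have : ∀ j : Fin (M+1), Pmat M i j * x j
        = (wvec M i * c / (∑ k, wvec M k * wvec M k)) * (wvec M j * wvec M j) := by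
      intro j
      rw [hx j]
      show wvec M i * wvec M j / (∑ k, wvec M k * wvec M k) * (c * wvec M j) = _
      ring
    rw [Finset.sum_congr rfl (fun j _ => this j), ← Finset.mul_sum]
    rw [div_mul_cancel₀ _ hQ]
    ring
  simp only [Pi.sub_apply, Pi.zero_apply, hP, hx i, sub_self]

lemma proj_char (M : ℕ) (x : Fin (M+1) → ℝ) (h : (1 - Pmat M).mulVec x = 0) (i : Fin (M+1)) :
    x i = ((∑ j, wvec M j * x j) / (∑ k, wvec M k * wvec M k)) * wvec M i := by
  have := congrFun h i
  rw [Matrix.sub_mulVec, Matrix.one_mulVec] at this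
  simp only [Pi.sub_apply, Pi.zero_apply, sub_eq_zero] at this
  rw [this]
  rw [Matrix.mulVec, dotProduct]
  have : ∀ j : Fin (M+1), Pmat M i j * x j
      = (wvec M i / (∑ k, wvec M k * wvec M k)) * (wvec M j * x j) := by
    intro j
    show wvec M i * wvec M j / (∑ k, wvec M k * wvec M k) * x j = _
    ring
  rw [Finset.sum_congr rfl (fun j _ => this j), ← Finset.mul_sum]
  ring

lemma solve_rec (g : ℕ → ℝ) (r : ℝ) (M : ℕ)
    (hrec : ∀ i, i < M → g i + g (i+1) = r) :
    ∀ n, n ≤ M → g n = if Even n then g 0 else r - g 0 := by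
  intro n
  induction n with
  | zero => intro _; simp
  | succ n ih =>
    intro h
    have h1 := hrec n (by omega)
    have h2 := ih (by omega)
    rcases Nat.even_or_odd n with he | ho
    · rw [if_pos he] at h2
      rw [if_neg (by simp [Nat.even_add_one, he])]
      linarith
    · have hne : ¬ Even n := Nat.not_even_iff_odd.mpr ho
      rw [if_neg hne] at h2
      rw [if_pos (by simp [Nat.even_add_one, hne])]
      linarith

/-- For `M+1` odd, the vectors with ones in odd resp. even positions form a
basis of the kernel of `(I − P)L`. -/
theorem stmt18 (M : ℕ) (hM : 0 < M) (hodd : Odd (M + 1)) :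
    LinearMap.ker ((1 - Pmat M) * Lmat M).mulVecLin
      = Submodule.span ℝ
          {(fun i : Fin (M+1) => if Odd (i : ℕ) then (1:ℝ) else 0),
           (fun i : Fin (M+1) => if Even (i : ℕ) then (1:ℝ) else 0)} ∧
    LinearIndependent ℝ
      ![(fun i : Fin (M+1) => if Odd (i : ℕ) then (1:ℝ) else 0),
        (fun i : Fin (M+1) => if Even (i : ℕ) then (1:ℝ) else 0)] := by
  obtain ⟨m, hm⟩ := hodd
  have hMe : Even M := ⟨m, by omega⟩
  have hMne : (M:ℝ) ≠ 0 := Nat.cast_ne_zero.mpr hM.ne'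
  have hker : ∀ u : Fin (M+1) → ℝ,
      ((Lmat M).mulVec u = fun i => (M:ℝ) * wvec M i) →
      u ∈ LinearMap.ker ((1 - Pmat M) * Lmat M).mulVecLin := by
    intro u hu
    rw [LinearMap.mem_ker, Matrix.mulVecLin_apply, ← Matrix.mulVec_mulVec, hu]
    exact proj_kill M _ (M:ℝ) (fun i => rfl)
  constructor
  · apply le_antisymm
    · intro v hv
      rw [LinearMap.mem_ker, Matrix.mulVecLin_apply, ← Matrix.mulVec_mulVec] at hv
      set c : ℝ := (∑ j, wvec M j * (Lmat M).mulVec v j) / (∑ k, wvec M k * wvec M k) with hcdef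
      have hc : ∀ i, (Lmat M).mulVec v i = c * wvec M i := fun i => proj_char M _ hv i
      set g : ℕ → ℝ := fun k => if h : k < M+1 then v ⟨k, h⟩ else 0 with hgdef
      have hvg : v = fun j : Fin (M+1) => g j.val := by
        funext j
        simp only [hgdef, j.isLt, dif_pos, Fin.eta]
      have hrec : ∀ i, i < M → g i + g (i+1) = c / M := by
        intro i hi
        have hA := mulVec_formula M g ⟨i, by omega⟩
        have hB := mulVec_formula M g ⟨i+1, by omega⟩
        rw [← hvg] at hA hB
        have h1 := hc ⟨i, by omega⟩
        have h2 := hc ⟨i+1, by omega⟩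
        rw [hA, wvec_val] at h1
        rw [hB, wvec_val] at h2
        simp only [Fin.val_mk] at h1 h2
        rw [Finset.sum_range_succ (n := i+1), Finset.sum_range_succ (n := i)] at h2
        rw [Finset.sum_range_succ (n := i)] at h1
        have key : g i + g (i+1) = c * ((i+1:ℝ)/M) - c * ((i:ℝ)/M) := by
          push_cast at h1 h2 ⊢
          linarith
        rw [key]
        field_simp
        ring
      have hsol := solve_rec g (c/M) M hrec
      rw [Submodule.mem_span_pair]
      refine ⟨c/M - g 0, g 0, ?_⟩
      funext j
      have hj := hsol j.val (by omega)
      simp only [Pi.add_apply, Pi.smul_apply, smul_eq_mul]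
      have hvj : v j = g j.val := congrFun hvg j
      rcases Nat.even_or_odd (j.val) with he | ho
      · rw [if_pos he] at hj
        rw [hvj, hj, if_neg (Nat.not_odd_iff_even.mpr he), if_pos he]
        ring
      · have hne : ¬ Even j.val := Nat.not_even_iff_odd.mpr ho
        rw [if_neg hne] at hj
        rw [hvj, hj, if_pos ho, if_neg hne]
        ring
    · rw [Submodule.span_le]
      intro x hx
      simp only [Set.mem_insert_iff, Set.mem_singleton_iff] at hx
      rcases hx with rfl | rfl
      · exact hker _ (funext fun i => L_vo M hM hMe i)
      · exact hker _ (funext fun i => L_ve M hM hMe i)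
  · rw [LinearIndependent.pair_iff]
    intro s t hst
    have h0 := congrFun hst ⟨0, by omega⟩
    have h1 := congrFun hst ⟨1, by omega⟩
    simp only [Pi.add_apply, Pi.smul_apply, smul_eq_mul, Pi.zero_apply] at h0 h1
    norm_num at h0 h1
    exact ⟨h1, h0⟩
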